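/- Let R be a left-Artinian ring with identity whose only unit is 1 (every invertible element of R equals 1). Then there exist k : ℕ and a ring isomorphism R ≃+* (Fin k → ZMod 2), i.e. R is isomorphic to a finite direct product of copies of the field ℤ₂. -/

import Mathlib

section Aux

variable {R : Type*} [Ring R]

/-- In a ring whose only unit is 1, square-zero elements vanish. -/
lemma aux_sq_zero (hu : ∀ u : R, IsUnit u → u = 1) (x : R) (hx : x * x = 0) : x = 0 := by
  have h1 : (1 + x) * (1 - x) = 1 := by
    have : (1 + x) * (1 - x) = 1 - x * x := by noncomm_ring
    rw [this, hx, sub_zero]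
  have h2 : (1 - x) * (1 + x) = 1 := by
    have : (1 - x) * (1 + x) = 1 - x * x := by noncomm_ring
    rw [this, hx, sub_zero]
  have h3 : (1 + x : R) = 1 := hu _ ⟨⟨1 + x, 1 - x, h1, h2⟩, rfl⟩
  have := left_eq_add.mp h3.symm
  exact this

lemma aux_flip (hu : ∀ u : R, IsUnit u → u = 1) {x y : R} (h : x * y = 0) : y * x = 0 := by
  apply aux_sq_zero hu
  calc y * x * (y * x) = y * (x * y) * x := by noncomm_ring
  _ = 0 := by rw [h]; noncomm_ring

lemma aux_sq_cancel (hu : ∀ u : R, IsUnit u → u = 1) {x y : R}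
    (h : x * (x * y) = 0) : x * y = 0 := by
  have h1 : (x * y * x) * (x * y * x) = 0 := by
    calc (x * y * x) * (x * y * x) = x * y * (x * (x * y)) * x := by noncomm_ring
    _ = 0 := by rw [h]; noncomm_ring
  have h2 : x * y * x = 0 := aux_sq_zero hu _ h1
  apply aux_sq_zero hu
  calc (x * y) * (x * y) = (x * y * x) * y := by noncomm_ring
  _ = 0 := by rw [h2]; noncomm_ring

lemma aux_pow_cancel (hu : ∀ u : R, IsUnit u → u = 1) (n : ℕ) :
    ∀ x y : R, x ^ (n + 1) * y = 0 → x * y = 0 := by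
  induction n with
  | zero => intro x y h; simpa using h
  | succ n ih =>
    intro x y h
    apply ih x y
    have h' : x * (x * (x ^ n * y)) = 0 := by
      have he : x ^ (n + 2) * y = x * (x * (x ^ n * y)) := by
        rw [pow_succ', pow_succ', mul_assoc, mul_assoc]
      rw [← he]; exact h
    have := aux_sq_cancel hu h'
    rw [← mul_assoc, ← pow_succ'] at this
    exact this

/-- idempotents are central in such rings. -/
lemma aux_idem_central (hu : ∀ u : R, IsUnit u → u = 1) {e : R} (he : e * e = e)
    (y : R) : e * y = y * e := by
  have he2 : ∀ t : R, e * (e * t) = e * t := fun t => by rw [← mul_assoc, he]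
  have h1 : e * y - e * y * e = 0 := by
    apply aux_sq_zero hu
    calc (e * y - e * y * e) * (e * y - e * y * e)
        = e * y * (e * y) - e * y * (e * (y * e)) - e * (y * (e * (e * y)))
          + e * (y * (e * (e * (y * e)))) := by noncomm_ring
    _ = 0 := by rw [he2, he2]; noncomm_ring
  have h2 : y * e - e * y * e = 0 := by
    apply aux_sq_zero hu
    calc (y * e - e * y * e) * (y * e - e * y * e)
        = y * (e * (y * e)) - y * (e * (e * (y * e))) - e * (y * (e * (y * e)))
          + e * (y * (e * (e * (y * e)))) := by noncomm_ring
    _ = 0 := by rw [he2]; noncomm_ring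
  rw [sub_eq_zero.mp h1, sub_eq_zero.mp h2]

/-- Every element of a left-Artinian ring with only unit 1 is idempotent. -/
lemma aux_idem [IsArtinianRing R] (hu : ∀ u : R, IsUnit u → u = 1) (a : R) :
    a * a = a := by
  obtain ⟨n, hn⟩ := IsArtinian.monotone_stabilizes (R := R) (M := R)
    ⟨fun n => OrderDual.toDual (Ideal.span {a ^ n}), by
      intro i j hij
      apply OrderDual.toDual_le_toDual.mpr
      apply Ideal.span_le.mpr
      simp only [Set.singleton_subset_iff, SetLike.mem_coe]
      obtain ⟨k, rfl⟩ := Nat.exists_eq_add_of_le hij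
      rw [add_comm, pow_add]
      exact Ideal.mul_mem_left _ _ (Ideal.subset_span rfl)⟩
  have hspan : Ideal.span {a ^ n} = Ideal.span {a ^ (n+1)} :=
    congrArg OrderDual.ofDual (hn (n + 1) (Nat.le_succ n))
  have hmem : a ^ n ∈ Ideal.span {a ^ (n + 1)} := by
    rw [← hspan]; exact Ideal.subset_span rfl
  obtain ⟨r, hr⟩ := Ideal.mem_span_singleton'.mp hmem
  -- a = a * (r * a)
  have hra : a * (1 - r * a) = 0 := by
    have h0 : (1 - r * a) * a ^ n = 0 := by
      have hh : r * a ^ (n + 1) = (r * a) * a ^ n := by rw [pow_succ', ← mul_assoc]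
      rw [sub_mul, one_mul, ← hh, hr, sub_self]
    have h1 : a ^ n * (1 - r * a) = 0 := aux_flip hu h0
    rcases n with _ | m
    · simp only [pow_zero, one_mul] at h1
      rw [h1, mul_zero]
    · exact aux_pow_cancel hu m a (1 - r * a) h1
  have hara : a * (r * a) = a := by
    have h' : a - a * (r * a) = 0 := by rw [← hra]; noncomm_ring
    exact (sub_eq_zero.mp h').symm
  set e := r * a with he_def
  have hee : e * e = e := by
    calc e * e = r * (a * (r * a)) := by rw [he_def]; noncomm_ring
    _ = r * a := by rw [hara]
  have hcent := aux_idem_central hu hee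
  have hae : a * e = a := hara
  have hea : e * a = a := by rw [hcent a, hae]
  -- u := a + 1 - e is a unit with inverse v := e * r * e + 1 - e
  set u := a + 1 - e with hu_def
  set v := e * r * e + 1 - e with hv_def
  have hvu : v * u = 1 := by
    have t1 : e * r * e * a = e := by
      calc e * r * e * a = e * r * (e * a) := by noncomm_ring
      _ = e * (r * a) := by rw [hea, mul_assoc]
      _ = e := by rw [← he_def, hee]
    have t2 : e * r * e * e = e * r * e := by
      calc e * r * e * e = e * r * (e * e) := by noncomm_ring
      _ = e * r * e := by rw [hee]
    calc v * u = e * r * e * a + e * r * e - e * r * e * e + a - e * a + (1 - e) - (e - e * e) := by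
          rw [hv_def, hu_def]; noncomm_ring
    _ = 1 := by rw [t1, t2, hea, hee]; noncomm_ring
  have hw : (u * v) * (u * v) = u * v := by
    calc (u * v) * (u * v) = u * (v * u) * v := by noncomm_ring
    _ = u * v := by rw [hvu]; noncomm_ring
  have hwc := aux_idem_central hu hw
  have huv : u * v = 1 := by
    calc u * v = (u * v) * 1 := by noncomm_ring
    _ = (u * v) * (v * u) := by rw [hvu]
    _ = ((u * v) * v) * u := by noncomm_ring
    _ = (v * (u * v)) * u := by rw [hwc v]
    _ = v * (u * (v * u)) := by noncomm_ring
    _ = 1 := by rw [hvu, mul_one]; exact hvu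
  have hu1 : u = 1 := hu u ⟨⟨u, v, huv, hvu⟩, rfl⟩
  have hae' : a = e := by
    have h1 : a + 1 - e = 1 := hu1
    have h' : a - e = 0 := by
      have h2 : (a + 1 - e) - 1 = 1 - 1 := by rw [h1]
      calc a - e = (a + 1 - e) - 1 := by noncomm_ring
      _ = 0 := by rw [h2, sub_self]
    exact sub_eq_zero.mp h'
  rw [hae', hee]

end Aux

/-- A left-Artinian ring whose only unit is `1` is isomorphic to a
finite direct product of copies of `ℤ₂`. -/
theorem stmt6 {R : Type*} [Ring R] [IsArtinianRing R]
    (hu : ∀ u : R, IsUnit u → u = 1) :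
    ∃ k : ℕ, Nonempty (R ≃+* (Fin k → ZMod 2)) := by
  classical
  have key : ∀ a : R, a * a = a := aux_idem hu
  have neg1 : (-1 : R) = 1 := hu _ isUnit_one.neg
  have h2 : ∀ x : R, x + x = 0 := by
    intro x
    have hx : -x = x := by
      calc -x = -1 * x := by noncomm_ring
      _ = x := by rw [neg1, one_mul]
    calc x + x = x + -x := by rw [hx]
    _ = 0 := by abel
  have hcomm : ∀ a b : R, a * b = b * a := by
    intro a b
    have hab : a * b + b * a = 0 := by
      have h := key (a + b)
      have hx : a * a + (a * b + (b * a + b * b)) = a + b := by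
        calc a * a + (a * b + (b * a + b * b)) = (a + b) * (a + b) := by noncomm_ring
        _ = a + b := h
      rw [key a, key b] at hx
      have h3 : a * b + (b * a + b) = b := add_left_cancel hx
      have h4 : (a * b + b * a) + b = 0 + b := by
        rw [zero_add, add_assoc]
        exact h3
      exact add_right_cancel h4
    calc a * b = (a * b + b * a) + b * a := by rw [add_assoc, h2 (b * a), add_zero]
    _ = b * a := by rw [hab, zero_add]
  letI : CommRing R := { ‹Ring R› with mul_comm := hcomm }
  haveI : IsArtinianRing R := ‹IsArtinianRing R›
  haveI : IsReduced R := by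
    constructor
    intro x hx
    obtain ⟨n, hn⟩ := hx
    have hp : ∀ k : ℕ, x ^ (k + 1) = x := by
      intro k
      induction k with
      | zero => simp
      | succ k ih => rw [pow_succ, ih, key]
    rcases n with _ | m
    · have h1 : (1 : R) = 0 := by simpa using hn
      calc x = x * 1 := (mul_one x).symm
      _ = 0 := by rw [h1, mul_zero]
    · rw [hp m] at hn
      exact hn
  haveI := (IsArtinianRing.setOfPred_isMaximal_finite R).to_subtype
  letI : Fintype {I : Ideal R | I.IsMaximal} := Fintype.ofFinite _
  have hfield : ∀ I : {I : Ideal R | I.IsMaximal},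
      Nonempty ((R ⧸ I.1) ≃+* ZMod 2) := by
    intro I
    haveI hmax : I.1.IsMaximal := I.2
    haveI : Nontrivial (R ⧸ I.1) := Ideal.Quotient.nontrivial_iff.mpr hmax.ne_top
    haveI : IsDomain (R ⧸ I.1) := Ideal.Quotient.isDomain I.1
    have h01 : ∀ x : R ⧸ I.1, x = 0 ∨ x = 1 := by
      intro x
      obtain ⟨r, rfl⟩ := Ideal.Quotient.mk_surjective x
      have hxx : Ideal.Quotient.mk I.1 r * Ideal.Quotient.mk I.1 r
          = Ideal.Quotient.mk I.1 r := by
        rw [← map_mul, key r]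
      have : Ideal.Quotient.mk I.1 r * (Ideal.Quotient.mk I.1 r - 1) = 0 := by
        rw [mul_sub, hxx, mul_one, sub_self]
      rcases mul_eq_zero.mp this with h | h
      · exact Or.inl h
      · exact Or.inr (sub_eq_zero.mp h)
    letI : Fintype (R ⧸ I.1) :=
      ⟨{0, 1}, fun x => by rcases h01 x with h | h <;> simp [h]⟩
    have hcard : Fintype.card (R ⧸ I.1) = 2 := by
      have huniv : (Finset.univ : Finset (R ⧸ I.1)) = {0, 1} := rfl
      rw [Fintype.card, huniv, Finset.card_insert_of_notMem (by simp),
        Finset.card_singleton]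
    exact ⟨(ZMod.ringEquivOfPrime _ Nat.prime_two hcard).symm⟩
  have e1 := (IsArtinianRing.equivPi R).toRingEquiv
  have e2 := RingEquiv.piCongrRight fun I : MaximalSpectrum R =>
    Classical.choice (hfield ⟨I.asIdeal, I.isMaximal⟩)
  letI : Fintype (MaximalSpectrum R) := Fintype.ofFinite _
  have e3 := RingEquiv.piCongrLeft (fun _ : Fin (Fintype.card (MaximalSpectrum R)) =>
    ZMod 2) (Fintype.equivFin (MaximalSpectrum R))
  exact ⟨_, ⟨(e1.trans e2).trans e3⟩⟩
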